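/- Let X be a semitopological R-module over a topological ring R and B ⊆ X an R-bounded subset. Then the multiplication map R × B → X, (r,x) ↦ r*x, is jointly continuous. -/

import Mathlib

theorem continuousOn_smul_of_RBounded {R X : Type*}
    [Ring R] [TopologicalSpace R] [IsTopologicalRing R]
    [AddCommGroup X] [TopologicalSpace X] [IsTopologicalAddGroup X] [T2Space X]
    [Module R X]
    (hsep₁ : ∀ r : R, Continuous fun x : X => r • x)
    (hsep₂ : ∀ x : X, Continuous fun r : R => r • x)
    (B : Set X)
    (hbounded : ∀ U ∈ nhds (0 : X), ∃ V ∈ nhds (0 : R), ∀ r ∈ V, ∀ x ∈ B, r • x ∈ U) :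
    ContinuousOn (fun p : R × X => p.1 • p.2) ((Set.univ : Set R) ×ˢ B) := by
  rintro ⟨r₀, x₀⟩ ⟨-, hx₀⟩
  have key : Filter.Tendsto (fun p : R × X => (p.1 - r₀) • p.2)
      (nhdsWithin (r₀, x₀) (Set.univ ×ˢ B)) (nhds 0) := by
    intro U hU
    obtain ⟨V, hV, hVB⟩ := hbounded U hU
    have h1 : ∀ᶠ p : R × X in nhdsWithin (r₀, x₀) (Set.univ ×ˢ B), p.1 - r₀ ∈ V := by
      apply Filter.Eventually.filter_mono nhdsWithin_le_nhds
      have ht : Filter.Tendsto (fun p : R × X => p.1 - r₀) (nhds (r₀, x₀)) (nhds 0) := by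
        have := (continuous_fst.sub (continuous_const : Continuous fun _ : R × X => r₀)).tendsto
          (r₀, x₀)
        convert this using 2
        · simp
        · exact (sub_self r₀).symm
      exact ht hV
    have h2 : ∀ᶠ p : R × X in nhdsWithin (r₀, x₀) (Set.univ ×ˢ B), p.2 ∈ B := by
      filter_upwards [self_mem_nhdsWithin] with p hp using hp.2
    rw [Filter.mem_map]
    filter_upwards [h1, h2] with p hp1 hp2 using hVB _ hp1 _ hp2
  have h3 : Filter.Tendsto (fun p : R × X => r₀ • p.2)
      (nhdsWithin (r₀, x₀) (Set.univ ×ˢ B)) (nhds (r₀ • x₀)) :=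
    (((hsep₁ r₀).comp continuous_snd).tendsto (r₀, x₀)).mono_left nhdsWithin_le_nhds
  have := key.add h3
  simpa [sub_smul, ContinuousWithinAt] using this
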